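/- arXiv:1901.02617 — 2 statements merged into one kernel-verified Lean document; each statement's English description precedes it below -/
import Mathlib

section
/- Let A and B be Hermitian n×n matrices and let c > 0. Suppose every eigenvalue ε of A satisfies (ε − c/2)² ≥ (c/2)², i.e. ε ≤ 0 or ε ≥ c. If the operator norm ‖B‖ satisfies ‖B‖² + 2‖B‖(‖A‖ + c/2) ≤ (c/2)² − (c/4)², then (A + B − c/2)² ≥ (c/4)² as an operator inequality; in particular A + B has no eigenvalue in the open interval (c/4, 3c/4). -/
open scoped ComplexOrder
open Matrix

namespace GapAux


variable {n : ℕ}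

lemma conj_sub (V : Matrix (Fin n) (Fin n) ℂ) (hV1 : V * star V = 1)
    (d : Fin n → ℂ) (r : ℂ) :
    V * diagonal d * star V - r • 1 = V * diagonal (fun i => d i - r) * star V := by
  have hs : r • (1 : Matrix (Fin n) (Fin n) ℂ) = V * (r • 1) * star V := by
    rw [Matrix.mul_smul, mul_one, Matrix.smul_mul, hV1]
  rw [hs, ← Matrix.sub_mul, ← Matrix.mul_sub]
  congr 2
  rw [show r • (1 : Matrix (Fin n) (Fin n) ℂ) = diagonal (fun _ => r) by
    simp [← Matrix.diagonal_one, ← Matrix.diagonal_smul], Matrix.diagonal_sub]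

lemma conj_mul (V : Matrix (Fin n) (Fin n) ℂ) (hV2 : star V * V = 1)
    (d e : Fin n → ℂ) :
    (V * diagonal d * star V) * (V * diagonal e * star V) =
      V * diagonal (fun i => d i * e i) * star V := by
  simp only [Matrix.mul_assoc]
  rw [show star V * (V * (diagonal e * star V)) = diagonal e * star V by
    rw [← Matrix.mul_assoc, hV2, one_mul]]
  rw [← Matrix.mul_assoc (diagonal d), diagonal_mul_diagonal]

lemma lin_rep (H : Matrix (Fin n) (Fin n) ℂ) (hH : H.IsHermitian) (t : ℝ) :
    H - ((t : ℝ) : ℂ) • 1 =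
      (hH.eigenvectorUnitary : Matrix (Fin n) (Fin n) ℂ) *
        Matrix.diagonal (fun i => ((hH.eigenvalues i - t : ℝ) : ℂ)) *
        star (hH.eigenvectorUnitary : Matrix (Fin n) (Fin n) ℂ) := by
  set V := (hH.eigenvectorUnitary : Matrix (Fin n) (Fin n) ℂ) with hVdef
  have hV1 : V * star V = 1 := Matrix.mem_unitaryGroup_iff.mp hH.eigenvectorUnitary.2
  conv_lhs => rw [hH.spectral_theorem, Unitary.conjStarAlgAut_apply]
  rw [conj_sub V hV1]
  congr 2
  funext i
  push_cast
  rfl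

lemma quad_rep (H : Matrix (Fin n) (Fin n) ℂ) (hH : H.IsHermitian) (t s : ℝ) :
    (H - ((t : ℝ) : ℂ) • 1) ^ 2 - ((s : ℝ) : ℂ) • 1 =
      (hH.eigenvectorUnitary : Matrix (Fin n) (Fin n) ℂ) *
        Matrix.diagonal (fun i => (((hH.eigenvalues i - t) ^ 2 - s : ℝ) : ℂ)) *
        star (hH.eigenvectorUnitary : Matrix (Fin n) (Fin n) ℂ) := by
  set V := (hH.eigenvectorUnitary : Matrix (Fin n) (Fin n) ℂ) with hVdef
  have hV1 : V * star V = 1 := Matrix.mem_unitaryGroup_iff.mp hH.eigenvectorUnitary.2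
  have hV2 : star V * V = 1 := Matrix.mem_unitaryGroup_iff'.mp hH.eigenvectorUnitary.2
  rw [sq, lin_rep H hH t, conj_mul V hV2, conj_sub V hV1,
    show (fun i => ((hH.eigenvalues i - t : ℝ) : ℂ) * ((hH.eigenvalues i - t : ℝ) : ℂ)
        - ((s : ℝ) : ℂ)) = fun i => (((hH.eigenvalues i - t) ^ 2 - s : ℝ) : ℂ) from
      funext fun i => by push_cast; ring]

lemma posSemidef_of_conj (V : Matrix (Fin n) (Fin n) ℂ) (d : Fin n → ℝ)
    (h : ∀ i, 0 ≤ d i) : (V * diagonal (fun i => ((d i : ℝ) : ℂ)) * star V).PosSemidef := by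
  have hd : Matrix.PosSemidef (diagonal (fun i => ((d i : ℝ) : ℂ))) :=
    Matrix.PosSemidef.diagonal fun i => by
      simpa using Complex.zero_le_real.mpr (h i)
  simpa [Matrix.star_eq_conjTranspose] using hd.mul_mul_conjTranspose_same V

lemma nonneg_of_posSemidef_conj (V : Matrix (Fin n) (Fin n) ℂ)
    (hV2 : star V * V = 1) (d : Fin n → ℝ)
    (h : (V * diagonal (fun i => ((d i : ℝ) : ℂ)) * star V).PosSemidef) (i : Fin n) :
    0 ≤ d i := by
  have h2 := h.conjTranspose_mul_mul_same V
  have h3 : Vᴴ * (V * diagonal (fun i => ((d i : ℝ) : ℂ)) * star V) * V =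
      diagonal (fun i => ((d i : ℝ) : ℂ)) := by
    rw [← Matrix.star_eq_conjTranspose]
    calc star V * (V * diagonal (fun i => ((d i : ℝ) : ℂ)) * star V) * V
        = (star V * V) * diagonal (fun i => ((d i : ℝ) : ℂ)) * (star V * V) := by
          simp only [Matrix.mul_assoc]
      _ = diagonal (fun i => ((d i : ℝ) : ℂ)) := by rw [hV2, one_mul, mul_one]
  rw [h3] at h2
  have := Matrix.posSemidef_diagonal_iff.mp h2 i
  exact_mod_cast Complex.zero_le_real.mp this



variable {n : ℕ}

lemma abs_eigenvalue_le (M : Matrix (Fin n) (Fin n) ℂ) (hM : M.IsHermitian) (i : Fin n) :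
    |hM.eigenvalues i| ≤ ‖Matrix.toEuclideanCLM (𝕜 := ℂ) M‖ := by
  have h1 : ((hM.eigenvalues i : ℝ) : ℂ) ∈ spectrum ℂ M :=
    spectrum.algebraMap_mem ℂ (hM.eigenvalues_mem_spectrum_real i)
  have h2 : ((hM.eigenvalues i : ℝ) : ℂ) ∈ spectrum ℂ (Matrix.toEuclideanCLM (𝕜 := ℂ) M) := by
    rwa [AlgEquiv.spectrum_eq (Matrix.toEuclideanCLM (𝕜 := ℂ) (n := Fin n))]
  have h3 := spectrum.subset_closedBall_norm_mul _ h2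
  rw [Metric.mem_closedBall, dist_zero_right] at h3
  have h4 : ‖(1 : EuclideanSpace ℂ (Fin n) →L[ℂ] EuclideanSpace ℂ (Fin n))‖ ≤ 1 := by
    rw [ContinuousLinearMap.one_def]; exact ContinuousLinearMap.norm_id_le
  have h5 : (0 : ℝ) ≤ ‖Matrix.toEuclideanCLM (𝕜 := ℂ) M‖ := norm_nonneg _
  have h6 : ‖((hM.eigenvalues i : ℝ) : ℂ)‖ = |hM.eigenvalues i| := by
    simp [Complex.norm_real]
  nlinarith [h3]


end GapAux

open GapAux

set_option maxHeartbeats 2000000 in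
set_option synthInstance.maxHeartbeats 400000 in

/-- Stability of a spectral gap `[0, c]` of a Hermitian matrix `A` under a small
Hermitian perturbation `B`. -/
theorem stmt_2 (n : ℕ) (A B : Matrix (Fin n) (Fin n) ℂ)
    (hA : A.IsHermitian) (hB : B.IsHermitian) (c : ℝ) (hc : 0 < c)
    (hgap : ∀ ε : ℝ, (ε : ℂ) ∈ spectrum ℂ A → (c / 2) ^ 2 ≤ (ε - c / 2) ^ 2)
    (hnorm : ‖Matrix.toEuclideanCLM (𝕜 := ℂ) B‖ ^ 2 +
        2 * ‖Matrix.toEuclideanCLM (𝕜 := ℂ) B‖ *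
          (‖Matrix.toEuclideanCLM (𝕜 := ℂ) A‖ + c / 2) ≤ (c / 2) ^ 2 - (c / 4) ^ 2) :
    ((A + B - ((c / 2 : ℝ) : ℂ) • 1) ^ 2 - (((c / 4) ^ 2 : ℝ) : ℂ) • 1).PosSemidef ∧
      ∀ μ : ℝ, (μ : ℂ) ∈ spectrum ℂ (A + B) → ¬(c / 4 < μ ∧ μ < 3 * c / 4) := by
  classical
  set b := ‖Matrix.toEuclideanCLM (𝕜 := ℂ) B‖ with hbdef
  set a := ‖Matrix.toEuclideanCLM (𝕜 := ℂ) A‖ with hadef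
  have hb0 : 0 ≤ b := norm_nonneg _
  have ha0 : 0 ≤ a := norm_nonneg _
  set C := A - ((c / 2 : ℝ) : ℂ) • (1 : Matrix (Fin n) (Fin n) ℂ) with hCdef
  have h1herm : (((c / 2 : ℝ) : ℂ) • (1 : Matrix (Fin n) (Fin n) ℂ)).IsHermitian := by
    show _ᴴ = _
    simp [Matrix.conjTranspose_smul, Complex.star_def, Complex.conj_ofReal]
  have hC : C.IsHermitian := hA.sub h1herm
  set D := C * B + B * C + B * B with hDdef
  have hD : D.IsHermitian := by
    show _ᴴ = _
    simp only [hDdef, Matrix.conjTranspose_add, Matrix.conjTranspose_mul, hB.eq, hC.eq]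
    abel
  set r := (c / 2) ^ 2 - (c / 4) ^ 2 with hrdef
  -- norm bound on the perturbation part
  have hφC : ‖Matrix.toEuclideanCLM (𝕜 := ℂ) C‖ ≤ a + c / 2 := by
    rw [hCdef, _root_.map_sub, _root_.map_smul, _root_.map_one]
    refine (norm_sub_le _ _).trans ?_
    have h3 : ‖((c / 2 : ℝ) : ℂ) • (1 : EuclideanSpace ℂ (Fin n) →L[ℂ] EuclideanSpace ℂ (Fin n))‖
        ≤ c / 2 := by
      refine (norm_smul_le ((c / 2 : ℝ) : ℂ)
        (1 : EuclideanSpace ℂ (Fin n) →L[ℂ] EuclideanSpace ℂ (Fin n))).trans ?_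
      have h2 : ‖((c / 2 : ℝ) : ℂ)‖ = c / 2 := by
        rw [Complex.norm_real, Real.norm_eq_abs, abs_of_nonneg (by linarith : (0:ℝ) ≤ c / 2)]
      have h1 : ‖(1 : EuclideanSpace ℂ (Fin n) →L[ℂ] EuclideanSpace ℂ (Fin n))‖ ≤ 1 := by
        rw [ContinuousLinearMap.one_def]; exact ContinuousLinearMap.norm_id_le
      rw [h2]; nlinarith
    linarith
  have hφD : ‖Matrix.toEuclideanCLM (𝕜 := ℂ) D‖ ≤ b * b + 2 * b * (a + c / 2) := by
    rw [hDdef, _root_.map_add, _root_.map_add, _root_.map_mul, _root_.map_mul, _root_.map_mul]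
    have n1 := norm_mul_le (Matrix.toEuclideanCLM (𝕜 := ℂ) C) (Matrix.toEuclideanCLM (𝕜 := ℂ) B)
    have n2 := norm_mul_le (Matrix.toEuclideanCLM (𝕜 := ℂ) B) (Matrix.toEuclideanCLM (𝕜 := ℂ) C)
    have n3 := norm_mul_le (Matrix.toEuclideanCLM (𝕜 := ℂ) B) (Matrix.toEuclideanCLM (𝕜 := ℂ) B)
    have t1 := norm_add_le (Matrix.toEuclideanCLM (𝕜 := ℂ) C * Matrix.toEuclideanCLM (𝕜 := ℂ) B)
      (Matrix.toEuclideanCLM (𝕜 := ℂ) B * Matrix.toEuclideanCLM (𝕜 := ℂ) C)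
    have t2 := norm_add_le (Matrix.toEuclideanCLM (𝕜 := ℂ) C * Matrix.toEuclideanCLM (𝕜 := ℂ) B +
      Matrix.toEuclideanCLM (𝕜 := ℂ) B * Matrix.toEuclideanCLM (𝕜 := ℂ) C)
      (Matrix.toEuclideanCLM (𝕜 := ℂ) B * Matrix.toEuclideanCLM (𝕜 := ℂ) B)
    have hφC0 : (0:ℝ) ≤ ‖Matrix.toEuclideanCLM (𝕜 := ℂ) C‖ := norm_nonneg _
    nlinarith
  have hDr : ∀ i, 0 ≤ hD.eigenvalues i - (-r) := by
    intro i
    have h := (abs_eigenvalue_le D hD i).trans hφD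
    have h2 : b * b + 2 * b * (a + c / 2) ≤ r := by rw [hrdef]; nlinarith
    have := (abs_le.mp (h.trans h2)).1
    linarith
  have hP2 : (D + ((r : ℝ) : ℂ) • 1).PosSemidef := by
    have he : D + ((r : ℝ) : ℂ) • (1 : Matrix (Fin n) (Fin n) ℂ) = D - ((-r : ℝ) : ℂ) • 1 := by
      rw [show ((-r : ℝ) : ℂ) = -((r : ℝ) : ℂ) by push_cast; ring, neg_smul, sub_neg_eq_add]
    rw [he, lin_rep D hD (-r)]
    exact posSemidef_of_conj _ _ hDr
  have hP1 : ((A - ((c / 2 : ℝ) : ℂ) • 1) ^ 2 - ((((c / 2) ^ 2 : ℝ)) : ℂ) • 1).PosSemidef := by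
    rw [quad_rep A hA]
    refine posSemidef_of_conj _ _ fun i => ?_
    have hmem : ((hA.eigenvalues i : ℝ) : ℂ) ∈ spectrum ℂ A :=
      spectrum.algebraMap_mem ℂ (hA.eigenvalues_mem_spectrum_real i)
    have := hgap _ hmem
    linarith
  have hsplit : (((c / 2) ^ 2 : ℝ) : ℂ) • (1 : Matrix (Fin n) (Fin n) ℂ) =
      ((r : ℝ) : ℂ) • 1 + (((c / 4) ^ 2 : ℝ) : ℂ) • 1 := by
    rw [← add_smul]
    congr 1
    push_cast [hrdef]
    ring
  have key : (A + B - ((c / 2 : ℝ) : ℂ) • 1) ^ 2 - (((c / 4) ^ 2 : ℝ) : ℂ) • 1 =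
      ((A - ((c / 2 : ℝ) : ℂ) • 1) ^ 2 - ((((c / 2) ^ 2 : ℝ)) : ℂ) • 1) +
        (D + ((r : ℝ) : ℂ) • 1) := by
    have hCB : A + B - ((c / 2 : ℝ) : ℂ) • (1 : Matrix (Fin n) (Fin n) ℂ) = C + B := by
      rw [hCdef]; abel
    rw [hCB, hDdef, ← hCdef, hsplit]
    set y := (((c / 4) ^ 2 : ℝ) : ℂ) with hydef
    set R := ((r : ℝ) : ℂ) with hRdef
    simp only [pow_two]
    rw [add_mul, mul_add, mul_add]
    abel
  have hPSD : ((A + B - ((c / 2 : ℝ) : ℂ) • 1) ^ 2 - (((c / 4) ^ 2 : ℝ) : ℂ) • 1).PosSemidef := by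
    rw [key]; exact hP1.add hP2
  refine ⟨hPSD, ?_⟩
  rintro μ hμ ⟨hl, hu⟩
  have hS : (A + B).IsHermitian := hA.add hB
  have hμℝ : μ ∈ spectrum ℝ (A + B) := by
    rwa [show ((μ : ℝ) : ℂ) = algebraMap ℝ ℂ μ from rfl, spectrum.algebraMap_mem_iff] at hμ
  obtain ⟨i, hi⟩ : μ ∈ Set.range hS.eigenvalues := hS.spectrum_real_eq_range_eigenvalues ▸ hμℝ
  rw [quad_rep (A + B) hS (c / 2) ((c / 4) ^ 2)] at hPSD
  have hV2 : star (hS.eigenvectorUnitary : Matrix (Fin n) (Fin n) ℂ) *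
      (hS.eigenvectorUnitary : Matrix (Fin n) (Fin n) ℂ) = 1 :=
    Matrix.mem_unitaryGroup_iff'.mp hS.eigenvectorUnitary.2
  have hnn := nonneg_of_posSemidef_conj _ hV2 _ hPSD i
  rw [hi] at hnn
  nlinarith
end

section
/- For every integer g ≥ 1, the sum S(n) = Σ_{j=0}^{n−1} ((n+1)/((j+1)(n−j)))^(g+1) · (j + g − 1)^(g−1)/(g−1)! over j with j + ℓ = n − 1 (ℓ = n−1−j), where each term is symmetrized as min over {j, ℓ}, is bounded uniformly in n: S(n) ≤ J(g) := (π²/3)·2^(g+1)·(g−1)^(g−1)/(g−1)!. Concretely: Σ_{j+ℓ=n−1, j,ℓ≥0} ((n+1)/((j+1)(ℓ+1)))^(g+1) · F(g; j, ℓ) ≤ J(g), where F(g;j,ℓ) = min{(j+g−1)^(g−1)/(g−1)!, (ℓ+g−1)^(g−1)/(g−1)!}. -/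
open Finset Real

lemma sum_inv_sq_le (n : ℕ) :
    ∑ j ∈ Finset.range n, (1:ℝ)/((j:ℝ)+1)^2 ≤ Real.pi^2/6 := by
  have h2 : ∑ k ∈ Finset.range (n+1), (1:ℝ)/(k:ℝ)^2 ≤ Real.pi^2/6 :=
    sum_le_hasSum _ (fun i _ => by positivity) hasSum_zeta_two
  rw [Finset.sum_range_succ'] at h2
  simp only [Nat.cast_add, Nat.cast_one, Nat.cast_zero] at h2
  simpa using h2

lemma term_bound (g a b : ℕ) (hg : 1 ≤ g) (hab : a ≤ b) :
    ((((a:ℝ)+1) + ((b:ℝ)+1)) / (((a:ℝ)+1) * ((b:ℝ)+1))) ^ (g+1) *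
      min (((a:ℝ) + g - 1)^(g-1)/(g-1).factorial) (((b:ℝ)+g-1)^(g-1)/(g-1).factorial)
    ≤ (2 ^ (g + 1) * ((g : ℝ) - 1) ^ (g - 1) / (g - 1).factorial) * (1/((a:ℝ)+1)^2) := by
  set A : ℝ := (a:ℝ)+1 with hA
  set B : ℝ := (b:ℝ)+1 with hB
  have hA0 : (0:ℝ) < A := by positivity
  have hB0 : (0:ℝ) < B := by positivity
  have hAB : A ≤ B := by simpa [hA, hB] using (by exact_mod_cast hab : (a:ℝ) ≤ b)
  have hfac : (0:ℝ) < (g-1).factorial := by positivity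
  have hg1 : (1:ℝ) ≤ (g:ℝ) := by exact_mod_cast hg
  have h1 : (A + B)/(A*B) ≤ 2/A := by
    rw [div_le_div_iff₀ (by positivity) hA0]
    nlinarith
  have h1' : ((A + B)/(A*B))^(g+1) ≤ (2/A)^(g+1) :=
    pow_le_pow_left₀ (by positivity) h1 _
  have h2 : min (((a:ℝ) + g - 1)^(g-1)/(g-1).factorial) (((b:ℝ)+g-1)^(g-1)/(g-1).factorial)
      ≤ ((a:ℝ) + g - 1)^(g-1)/(g-1).factorial := min_le_left _ _
  have h3 : ((a:ℝ)+g-1)^(g-1) ≤ ((g:ℝ)-1)^(g-1) * A^(g-1) := by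
    rcases eq_or_lt_of_le hg with h | h
    · simp [← h]
    · have hg2 : (2:ℝ) ≤ (g:ℝ) := by exact_mod_cast h
      have ha0 : (0:ℝ) ≤ (a:ℝ) := Nat.cast_nonneg a
      have hle : (a:ℝ)+g-1 ≤ ((g:ℝ)-1)*A := by nlinarith
      calc ((a:ℝ)+g-1)^(g-1) ≤ (((g:ℝ)-1)*A)^(g-1) :=
            pow_le_pow_left₀ (by nlinarith) hle _
        _ = ((g:ℝ)-1)^(g-1) * A^(g-1) := mul_pow _ _ _
  have hmin0 : 0 ≤ min (((a:ℝ) + g - 1)^(g-1)/(g-1).factorial)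
      (((b:ℝ)+g-1)^(g-1)/(g-1).factorial) := by
    apply le_min
    · apply div_nonneg _ hfac.le
      apply pow_nonneg
      linarith [(Nat.cast_nonneg a : (0:ℝ) ≤ a)]
    · apply div_nonneg _ hfac.le
      apply pow_nonneg
      linarith [(Nat.cast_nonneg b : (0:ℝ) ≤ b)]
  calc ((A + B)/(A*B)) ^ (g+1) *
      min (((a:ℝ) + g - 1)^(g-1)/(g-1).factorial) (((b:ℝ)+g-1)^(g-1)/(g-1).factorial)
      ≤ (2/A)^(g+1) * (((g:ℝ)-1)^(g-1) * A^(g-1) / (g-1).factorial) := by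
        apply mul_le_mul h1' (h2.trans (by gcongr)) hmin0 (by positivity)
    _ = (2 ^ (g + 1) * ((g : ℝ) - 1) ^ (g - 1) / (g - 1).factorial) * (1/A^2) := by
        have hpow : A^(g+1) = A^(g-1) * A^2 := by rw [← pow_add]; congr 1; omega
        rw [div_pow, hpow]
        field_simp

/-- Uniform-in-`n` bound `S(n) ≤ J(g)` on the symmetrized convolution sum
appearing in the perturbation theory:
`Σ_{j+ℓ=n-1} ((n+1)/((j+1)(ℓ+1)))^(g+1) F(g;j,ℓ) ≤ (π²/3) 2^(g+1) (g-1)^(g-1)/(g-1)!`. -/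
theorem stmt_9 (g n : ℕ) (hg : 1 ≤ g) (hn : 1 ≤ n) :
    ∑ j ∈ Finset.range n,
        (((n : ℝ) + 1) / (((j : ℝ) + 1) * (((n - 1 - j : ℕ) : ℝ) + 1))) ^ (g + 1) *
          min (((j : ℝ) + g - 1) ^ (g - 1) / (g - 1).factorial)
            ((((n - 1 - j : ℕ) : ℝ) + g - 1) ^ (g - 1) / (g - 1).factorial) ≤
      (Real.pi ^ 2 / 3) * 2 ^ (g + 1) * ((g : ℝ) - 1) ^ (g - 1) / (g - 1).factorial := by
  set C : ℝ := 2 ^ (g + 1) * ((g : ℝ) - 1) ^ (g - 1) / (g - 1).factorial with hC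
  have hg1 : (1:ℝ) ≤ (g:ℝ) := by exact_mod_cast hg
  have hCnn : 0 ≤ C := by
    apply div_nonneg _ (by positivity)
    apply mul_nonneg (by positivity)
    apply pow_nonneg; linarith
  have key : ∀ j ∈ Finset.range n,
      (((n : ℝ) + 1) / (((j : ℝ) + 1) * (((n - 1 - j : ℕ) : ℝ) + 1))) ^ (g + 1) *
        min (((j : ℝ) + g - 1) ^ (g - 1) / (g - 1).factorial)
          ((((n - 1 - j : ℕ) : ℝ) + g - 1) ^ (g - 1) / (g - 1).factorial)
      ≤ C * ((1:ℝ)/((j:ℝ)+1)^2 + 1/(((n-1-j:ℕ):ℝ)+1)^2) := by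
    intro j hj
    rw [Finset.mem_range] at hj
    set l : ℕ := n - 1 - j with hl
    have hn' : n = j + l + 1 := by omega
    have hcast : ((n:ℝ)+1) = ((j:ℝ)+1) + ((l:ℝ)+1) := by
      rw [hn']; push_cast; ring
    have hnn1 : (0:ℝ) ≤ 1/((j:ℝ)+1)^2 := by positivity
    have hnn2 : (0:ℝ) ≤ 1/((l:ℝ)+1)^2 := by positivity
    rcases le_total j l with hjl | hjl
    · calc _ ≤ C * (1/((j:ℝ)+1)^2) := by
            rw [hcast]; exact term_bound g j l hg hjl
        _ ≤ C * ((1:ℝ)/((j:ℝ)+1)^2 + 1/((l:ℝ)+1)^2) := by nlinarith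
    · calc _ ≤ C * (1/((l:ℝ)+1)^2) := by
            rw [hcast, min_comm, mul_comm ((j:ℝ)+1), add_comm ((j:ℝ)+1)]
            exact term_bound g l j hg hjl
        _ ≤ C * ((1:ℝ)/((j:ℝ)+1)^2 + 1/((l:ℝ)+1)^2) := by nlinarith
  calc ∑ j ∈ Finset.range n,
        (((n : ℝ) + 1) / (((j : ℝ) + 1) * (((n - 1 - j : ℕ) : ℝ) + 1))) ^ (g + 1) *
          min (((j : ℝ) + g - 1) ^ (g - 1) / (g - 1).factorial)
            ((((n - 1 - j : ℕ) : ℝ) + g - 1) ^ (g - 1) / (g - 1).factorial)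
      ≤ ∑ j ∈ Finset.range n, C * ((1:ℝ)/((j:ℝ)+1)^2 + 1/(((n-1-j:ℕ):ℝ)+1)^2) :=
        Finset.sum_le_sum key
    _ = C * ((∑ j ∈ Finset.range n, (1:ℝ)/((j:ℝ)+1)^2)
          + ∑ j ∈ Finset.range n, (1:ℝ)/(((n-1-j:ℕ):ℝ)+1)^2) := by
        rw [← Finset.mul_sum, Finset.sum_add_distrib]
    _ = C * ((∑ j ∈ Finset.range n, (1:ℝ)/((j:ℝ)+1)^2)
          + ∑ j ∈ Finset.range n, (1:ℝ)/((j:ℝ)+1)^2) := by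
        rw [Finset.sum_range_reflect (fun j => (1:ℝ)/((j:ℝ)+1)^2) n]
    _ ≤ C * (Real.pi^2/6 + Real.pi^2/6) := by
        have := sum_inv_sq_le n
        nlinarith
    _ = Real.pi ^ 2 / 3 * 2 ^ (g + 1) * ((g:ℝ) - 1) ^ (g - 1) / (g-1).factorial := by
        rw [hC]; ring
end
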